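/- Read's space ℛ = (c₀, |||·|||) is strictly convex, where |||x||| = ‖x‖_∞ + Σ_n r_n |⟨x, v_n⟩| with (v_n) dense in the unit sphere of ℓ₁ and r_n > 0 summable. -/

import Mathlib

open Filter Topology

set_option maxHeartbeats 1000000

/-- The sup norm of a real sequence. -/
noncomputable def supNorm (x : ℕ → ℝ) : ℝ := ⨆ k, |x k|

/-- The duality pairing `⟨x, v⟩ = ∑ₖ x k * v k`. -/
noncomputable def pairing (x v : ℕ → ℝ) : ℝ := ∑' k, x k * v k

/-- Read's norm `|||x||| = ‖x‖_∞ + ∑ₙ rₙ |⟨x, vₙ⟩|`. -/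
noncomputable def readNorm (r : ℕ → ℝ) (v : ℕ → ℕ → ℝ) (x : ℕ → ℝ) : ℝ :=
  supNorm x + ∑' n, r n * |pairing x (v n)|

section Aux

lemma bddAbove_abs_range {x : ℕ → ℝ} (hx : Tendsto x atTop (𝓝 0)) :
    BddAbove (Set.range fun k => |x k|) :=
  (hx.abs).bddAbove_range

lemma abs_le_supNorm {x : ℕ → ℝ} (hx : Tendsto x atTop (𝓝 0)) (k : ℕ) :
    |x k| ≤ supNorm x :=
  le_ciSup (bddAbove_abs_range hx) k

lemma supNorm_nonneg {x : ℕ → ℝ} (hx : Tendsto x atTop (𝓝 0)) : 0 ≤ supNorm x :=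
  (abs_nonneg _).trans (abs_le_supNorm hx 0)

lemma summable_abs_mul {x w : ℕ → ℝ} (hx : Tendsto x atTop (𝓝 0))
    (hw : Summable fun k => |w k|) : Summable fun k => |x k * w k| := by
  refine Summable.of_nonneg_of_le (fun k => abs_nonneg _) (fun k => ?_)
    (hw.mul_left (supNorm x))
  rw [abs_mul]
  exact mul_le_mul_of_nonneg_right (abs_le_supNorm hx k) (abs_nonneg _)

lemma summable_mul {x w : ℕ → ℝ} (hx : Tendsto x atTop (𝓝 0))
    (hw : Summable fun k => |w k|) : Summable fun k => x k * w k :=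
  (summable_abs_mul hx hw).of_abs

lemma abs_pairing_le {x w : ℕ → ℝ} (hx : Tendsto x atTop (𝓝 0))
    (hw : Summable fun k => |w k|) : |pairing x w| ≤ supNorm x * ∑' k, |w k| := by
  have h1 : |pairing x w| ≤ ∑' k, |x k * w k| := by
    have := norm_tsum_le_tsum_norm (f := fun k => x k * w k)
      (by simpa only [Real.norm_eq_abs] using summable_abs_mul hx hw)
    simpa only [Real.norm_eq_abs, pairing] using this
  refine h1.trans ?_
  rw [← tsum_mul_left]
  refine Summable.tsum_le_tsum (fun k => ?_) (summable_abs_mul hx hw) (hw.mul_left _)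
  rw [abs_mul]
  exact mul_le_mul_of_nonneg_right (abs_le_supNorm hx k) (abs_nonneg _)

lemma pairing_add {x y w : ℕ → ℝ} (hx : Tendsto x atTop (𝓝 0))
    (hy : Tendsto y atTop (𝓝 0)) (hw : Summable fun k => |w k|) :
    pairing (x + y) w = pairing x w + pairing y w := by
  unfold pairing
  rw [← Summable.tsum_add (summable_mul hx hw) (summable_mul hy hw)]
  exact tsum_congr fun k => by simp [add_mul]

lemma pairing_sub' {x : ℕ → ℝ} (hx : Tendsto x atTop (𝓝 0)) {w w' : ℕ → ℝ}
    (hw : Summable fun k => |w k|) (hw' : Summable fun k => |w' k|) :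
    pairing x w - pairing x w' = pairing x (fun k => w k - w' k) := by
  unfold pairing
  rw [← Summable.tsum_sub (summable_mul hx hw) (summable_mul hx hw')]
  exact tsum_congr fun k => by ring

lemma summable_abs_sub {w w' : ℕ → ℝ} (hw : Summable fun k => |w k|)
    (hw' : Summable fun k => |w' k|) : Summable fun k => |w k - w' k| :=
  Summable.of_nonneg_of_le (fun k => abs_nonneg _) (fun k => abs_sub _ _) (hw.add hw')

lemma summable_terms {x : ℕ → ℝ} (hx : Tendsto x atTop (𝓝 0)) {r : ℕ → ℝ}
    (hrpos : ∀ n, 0 < r n) (hrsum : Summable r) {v : ℕ → ℕ → ℝ}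
    (hv1 : ∀ n, Summable fun k => |v n k|) (hv2 : ∀ n, ∑' k, |v n k| = 1) :
    Summable fun n => r n * |pairing x (v n)| := by
  refine Summable.of_nonneg_of_le
    (fun n => mul_nonneg (hrpos n).le (abs_nonneg _)) (fun n => ?_)
    (hrsum.mul_right (supNorm x))
  have := abs_pairing_le hx (hv1 n)
  rw [hv2 n, mul_one] at this
  exact mul_le_mul_of_nonneg_left this (hrpos n).le

/-- key quadratic fact : `a*ε + b*ε² ≥ 0` for all ε implies `a = 0`. -/
lemma quad_zero {a b : ℝ} (h : ∀ ε : ℝ, 0 ≤ a * ε + b * ε ^ 2) : a = 0 := by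
  set d : ℝ := (2 * (|b| + 1))⁻¹ with hd_def
  have hd : 0 < d := by positivity
  have hbd : b * d ≤ 1 / 2 := by
    have hb : b ≤ |b| + 1 := (le_abs_self b).trans (by linarith)
    have h2 : (|b| + 1) * d = 1 / 2 := by
      rw [hd_def]; field_simp
    nlinarith
  have h1 := h (-a * d)
  have h2 : a ^ 2 * d ≤ 0 := by nlinarith [sq_nonneg a, mul_pos hd hd]
  have h3 : a ^ 2 ≤ 0 := by
    by_contra h4
    push_neg at h4
    nlinarith
  have := sq_nonneg a
  have : a ^ 2 = 0 := le_antisymm h3 (sq_nonneg a)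
  exact pow_eq_zero_iff (by norm_num) |>.mp this

end Aux

/-- Read's space `ℛ = (c₀, |||·|||)` is strictly convex, where `|||x||| = ‖x‖_∞ + ∑ₙ rₙ |⟨x, vₙ⟩|` with
`(vₙ)` dense in the unit sphere of `ℓ₁` and `rₙ > 0` summable: if
`|||x||| = |||y||| = 1` and `x ≠ y`, then `|||x + y||| < 2`. -/
theorem read_space_strictly_convex
    (r : ℕ → ℝ) (hrpos : ∀ n, 0 < r n) (hrsum : Summable r)
    (v : ℕ → ℕ → ℝ) (hv1 : ∀ n, Summable fun k => |v n k|)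
    (hv2 : ∀ n, ∑' k, |v n k| = 1)
    (hdense : ∀ w : ℕ → ℝ, (Summable fun k => |w k|) → ∑' k, |w k| = 1 →
      ∀ ε > 0, ∃ n, ∑' k, |w k - v n k| < ε)
    (x y : ℕ → ℝ) (hx : Tendsto x atTop (𝓝 0)) (hy : Tendsto y atTop (𝓝 0))
    (hx1 : readNorm r v x = 1) (hy1 : readNorm r v y = 1) (hne : x ≠ y) :
    readNorm r v (x + y) < 2 := by
  by_contra hcon
  push_neg at hcon
  have hxy : Tendsto (x + y) atTop (𝓝 0) := by
    have := hx.add hy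
    exact (by simpa using this : Tendsto (fun n => x n + y n) atTop (𝓝 0))
  -- summabilities
  have hSx := summable_terms hx hrpos hrsum hv1 hv2
  have hSy := summable_terms hy hrpos hrsum hv1 hv2
  have hSxy := summable_terms hxy hrpos hrsum hv1 hv2
  have hSsum : Summable fun n => r n * (|pairing x (v n)| + |pairing y (v n)|) := by
    have := hSx.add hSy
    refine this.congr fun n => ?_
    ring
  -- termwise ≤
  have hterm_le : ∀ n, r n * |pairing (x + y) (v n)| ≤
      r n * (|pairing x (v n)| + |pairing y (v n)|) := by
    intro n
    refine mul_le_mul_of_nonneg_left ?_ (hrpos n).le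
    rw [pairing_add hx hy (hv1 n)]
    exact abs_add_le _ _
  -- supNorm subadditive
  have hsup_le : supNorm (x + y) ≤ supNorm x + supNorm y := by
    refine ciSup_le fun k => ?_
    calc |(x + y) k| = |x k + y k| := by simp
    _ ≤ |x k| + |y k| := abs_add_le _ _
    _ ≤ supNorm x + supNorm y := add_le_add (abs_le_supNorm hx k) (abs_le_supNorm hy k)
  -- tsum ≤
  have hT_le : ∑' n, r n * |pairing (x + y) (v n)| ≤
      ∑' n, r n * (|pairing x (v n)| + |pairing y (v n)|) :=
    Summable.tsum_le_tsum hterm_le hSxy hSsum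
  have hTsplit : ∑' n, r n * (|pairing x (v n)| + |pairing y (v n)|)
      = (∑' n, r n * |pairing x (v n)|) + ∑' n, r n * |pairing y (v n)| := by
    rw [← Summable.tsum_add hSx hSy]
    exact tsum_congr fun n => by ring
  -- equality of total norms
  have hrx : readNorm r v x = supNorm x + ∑' n, r n * |pairing x (v n)| := rfl
  have hry : readNorm r v y = supNorm y + ∑' n, r n * |pairing y (v n)| := rfl
  have hrxy : readNorm r v (x + y)
      = supNorm (x + y) + ∑' n, r n * |pairing (x + y) (v n)| := rfl
  have hTeq : ∑' n, r n * |pairing (x + y) (v n)|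
      = ∑' n, r n * (|pairing x (v n)| + |pairing y (v n)|) := by
    rw [hrxy] at hcon; rw [hrx] at hx1; rw [hry] at hy1
    rw [hTsplit]
    linarith [hT_le, hsup_le, hTsplit]
  -- termwise equality
  have htermeq : ∀ n, r n * |pairing (x + y) (v n)| =
      r n * (|pairing x (v n)| + |pairing y (v n)|) := by
    intro n
    by_contra hne'
    have hlt : r n * |pairing (x + y) (v n)| <
        r n * (|pairing x (v n)| + |pairing y (v n)|) :=
      lt_of_le_of_ne (hterm_le n) hne'
    exact absurd hTeq (ne_of_lt (Summable.tsum_lt_tsum hterm_le hlt hSxy hSsum))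
  -- alignment on the dense sequence
  have halign_n : ∀ n, 0 ≤ pairing x (v n) * pairing y (v n) := by
    intro n
    have h := htermeq n
    have h' : |pairing (x + y) (v n)| = |pairing x (v n)| + |pairing y (v n)| :=
      mul_left_cancel₀ (hrpos n).ne' h
    rw [pairing_add hx hy (hv1 n)] at h'
    set a := pairing x (v n); set b := pairing y (v n)
    have h2 : (a + b) ^ 2 = (|a| + |b|) ^ 2 := by rw [← sq_abs (a + b), h']
    nlinarith [sq_abs a, sq_abs b, mul_nonneg (abs_nonneg a) (abs_nonneg b)]
  -- alignment on the whole sphere, by density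
  have halign : ∀ w : ℕ → ℝ, (Summable fun k => |w k|) → (∑' k, |w k|) = 1 →
      0 ≤ pairing x w * pairing y w := by
    intro w hw hw1
    have key : ∀ ε : ℝ, 0 < ε → (0:ℝ) ≤ pairing x w * pairing y w + ε := by
      intro ε hε
      set Cx := supNorm x with hCx_def
      set Cy := supNorm y with hCy_def
      have hCx : 0 ≤ Cx := supNorm_nonneg hx
      have hCy : 0 ≤ Cy := supNorm_nonneg hy
      set δ : ℝ := ε / (2 * (Cx + 1) * (Cy + 1)) with hδ_def
      have hδ : 0 < δ := by positivity
      obtain ⟨n, hn⟩ := hdense w hw hw1 δ hδ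
      set d := ∑' k, |w k - v n k| with hd_def
      have hd0 : 0 ≤ d := tsum_nonneg fun k => abs_nonneg _
      have hsub : Summable fun k => |w k - v n k| := summable_abs_sub hw (hv1 n)
      have hdx : |pairing x w - pairing x (v n)| ≤ Cx * d := by
        rw [pairing_sub' hx hw (hv1 n)]
        exact abs_pairing_le hx hsub
      have hdy : |pairing y w - pairing y (v n)| ≤ Cy * d := by
        rw [pairing_sub' hy hw (hv1 n)]
        exact abs_pairing_le hy hsub
      have hbx : |pairing x w| ≤ Cx := by
        have := abs_pairing_le hx hw
        rwa [hw1, mul_one] at this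
      have hby : |pairing y (v n)| ≤ Cy := by
        have := abs_pairing_le hy (hv1 n)
        rwa [hv2 n, mul_one] at this
      have hal := halign_n n
      set a := pairing x w; set b := pairing y w
      set a' := pairing x (v n); set b' := pairing y (v n)
      have e1 : a * b = a' * b' + a * (b - b') + (a - a') * b' := by ring
      have h1 : |a * (b - b')| ≤ Cx * (Cy * d) := by
        rw [abs_mul]
        exact mul_le_mul hbx hdy (abs_nonneg _) hCx
      have h2 : |(a - a') * b'| ≤ Cx * d * Cy := by
        rw [abs_mul]
        exact mul_le_mul hdx hby (abs_nonneg _) (by positivity)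
      have h1' : -(Cx * (Cy * d)) ≤ a * (b - b') := neg_le_of_abs_le h1
      have h2' : -(Cx * d * Cy) ≤ (a - a') * b' := neg_le_of_abs_le h2
      have hδd : 2 * (Cx + 1) * (Cy + 1) * δ = ε := by
        rw [hδ_def]; field_simp
      nlinarith [mul_lt_mul_of_pos_left hn (show (0:ℝ) < 2 * (Cx + 1) * (Cy + 1) by positivity),
        mul_nonneg (mul_nonneg hCx hCy) hd0]
    -- conclude from ∀ ε > 0
    by_contra hneg
    push_neg at hneg
    have := key (-(pairing x w * pairing y w) / 2) (by linarith)
    linarith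
  -- x ≠ 0
  have pairing_zero : ∀ w : ℕ → ℝ, pairing (fun _ => (0:ℝ)) w = 0 := by
    intro w; unfold pairing; simp
  have hxne : ∃ k, x k ≠ 0 := by
    by_contra hz
    push_neg at hz
    have hx0 : x = fun _ => (0:ℝ) := funext hz
    rw [hrx] at hx1
    have hs : supNorm x = 0 := by
      rw [hx0]; unfold supNorm; simp
    have ht : ∀ n, r n * |pairing x (v n)| = 0 := by
      intro n; rw [hx0, pairing_zero]; simp
    rw [hs] at hx1
    rw [tsum_congr ht] at hx1
    simp at hx1
  obtain ⟨k₀, hk₀⟩ := hxne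
  -- alignment on finitely supported vectors
  have halignF : ∀ (w : ℕ → ℝ) (S : Finset ℕ), (∀ k ∉ S, w k = 0) →
      0 ≤ pairing x w * pairing y w := by
    intro w S hWS
    have hwsum : Summable fun k => |w k| :=
      summable_of_ne_finset_zero (s := S) fun k hk => by rw [hWS k hk, abs_zero]
    by_cases hw0 : ∀ k, w k = 0
    · have : pairing x w = 0 := by
        unfold pairing
        have hfz : (fun k => x k * w k) = fun _ => (0:ℝ) :=
          funext fun k => by rw [hw0 k, mul_zero]
        rw [hfz, tsum_zero]
      rw [this, zero_mul]
    · push_neg at hw0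
      obtain ⟨k₁, hk₁⟩ := hw0
      set t := ∑' k, |w k| with ht_def
      have htpos : 0 < t := by
        have h1 : |w k₁| ≤ t := Summable.le_tsum hwsum k₁ fun k _ => abs_nonneg _
        have : 0 < |w k₁| := abs_pos.mpr hk₁
        linarith
      set w' : ℕ → ℝ := fun k => t⁻¹ * w k with hw'_def
      have hw'sum : Summable fun k => |w' k| := by
        refine Summable.congr (hwsum.mul_left t⁻¹) fun k => ?_
        rw [hw'_def, abs_mul, abs_of_nonneg (by positivity : (0:ℝ) ≤ t⁻¹)]
      have hw'1 : ∑' k, |w' k| = 1 := by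
        have : ∀ k, |w' k| = t⁻¹ * |w k| := fun k => by
          rw [hw'_def, abs_mul, abs_of_nonneg (by positivity : (0:ℝ) ≤ t⁻¹)]
        rw [tsum_congr this, tsum_mul_left, ← ht_def, inv_mul_cancel₀ htpos.ne']
      have hpx : pairing x w' = t⁻¹ * pairing x w := by
        unfold pairing
        rw [← tsum_mul_left]
        exact tsum_congr fun k => by rw [hw'_def]; ring
      have hpy : pairing y w' = t⁻¹ * pairing y w := by
        unfold pairing
        rw [← tsum_mul_left]
        exact tsum_congr fun k => by rw [hw'_def]; ring
      have h := halign w' hw'sum hw'1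
      rw [hpx, hpy] at h
      have ht2 : (0:ℝ) < t⁻¹ * t⁻¹ := by positivity
      nlinarith
  -- pairing with "basis" vectors
  have pairing_basis : ∀ (z : ℕ → ℝ) (j : ℕ) (s : ℝ), j ≠ k₀ →
      pairing z (fun k => if k = j then 1 else if k = k₀ then s else 0)
        = z j + s * z k₀ := by
    intro z j s hj
    unfold pairing
    rw [tsum_eq_sum (s := {j, k₀}) (f := fun k => z k * if k = j then 1 else if k = k₀ then s else 0)
      (by intro k hk
          simp only [Finset.mem_insert, Finset.mem_singleton] at hk
          push_neg at hk
          simp [hk.1, hk.2])]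
    rw [Finset.sum_insert (by simp [hj])]
    simp [hj, Ne.symm hj]
    ring
  -- proportionality: x k₀ * y j = y k₀ * x j for all j
  have hprop : ∀ j, x k₀ * y j = y k₀ * x j := by
    intro j
    by_cases hj : j = k₀
    · rw [hj]; ring
    · set A := x j; set B := x k₀; set C := y j; set D := y k₀
      have hq : ∀ s : ℝ, 0 ≤ (A + s * B) * (C + s * D) := by
        intro s
        have := halignF (fun k => if k = j then 1 else if k = k₀ then s else 0)
          {j, k₀} (by intro k hk
                      simp only [Finset.mem_insert, Finset.mem_singleton] at hk
                      push_neg at hk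
                      simp [hk.1, hk.2])
        rwa [pairing_basis x j s hj, pairing_basis y j s hj] at this
      have hkey : ∀ ε : ℝ, 0 ≤ (B * C - A * D) * ε + (B * D) * ε ^ 2 := by
        intro ε
        have h := hq (-A / B + ε)
        have hexp : (A + (-A / B + ε) * B) * (C + (-A / B + ε) * D)
            = (B * C - A * D) * ε + (B * D) * ε ^ 2 := by
          field_simp
          ring
        rwa [hexp] at h
      have := quad_zero hkey
      linarith
  -- hence y = c * x with c = y k₀ / x k₀ ≥ 0
  set c := y k₀ / x k₀ with hc_def
  have hyc : ∀ j, y j = c * x j := by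
    intro j
    have := hprop j
    rw [hc_def]
    field_simp
    linarith
  have hcnn : 0 ≤ c := by
    have h0 : 0 ≤ pairing x (fun k => if k = k₀ then 1 else 0)
        * pairing y (fun k => if k = k₀ then 1 else 0) := by
      refine halignF _ {k₀} ?_
      intro k hk
      simp only [Finset.mem_singleton] at hk
      simp [hk]
    have hpx : pairing x (fun k => if k = k₀ then 1 else 0) = x k₀ := by
      unfold pairing
      rw [tsum_eq_sum (s := {k₀}) (by intro k hk; simp only [Finset.mem_singleton] at hk; simp [hk])]
      simp
    have hpy : pairing y (fun k => if k = k₀ then 1 else 0) = y k₀ := by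
      unfold pairing
      rw [tsum_eq_sum (s := {k₀}) (by intro k hk; simp only [Finset.mem_singleton] at hk; simp [hk])]
      simp
    rw [hpx, hpy] at h0
    have : c = x k₀ * y k₀ / (x k₀ ^ 2) := by
      rw [hc_def]; field_simp
    rw [this]
    exact div_nonneg h0 (sq_nonneg _)
  -- readNorm y = c * readNorm x
  have hsy : supNorm y = c * supNorm x := by
    unfold supNorm
    have h1 : ∀ k, |y k| = c * |x k| := fun k => by
      rw [hyc k, abs_mul, abs_of_nonneg hcnn]
    calc (⨆ k, |y k|) = ⨆ k, c * |x k| := by simp_rw [h1]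
    _ = c * ⨆ k, |x k| := (Real.mul_iSup_of_nonneg hcnn _).symm
  have hpy' : ∀ n, pairing y (v n) = c * pairing x (v n) := by
    intro n
    unfold pairing
    rw [← tsum_mul_left]
    exact tsum_congr fun k => by rw [hyc k]; ring
  have hTy : ∑' n, r n * |pairing y (v n)| = c * ∑' n, r n * |pairing x (v n)| := by
    rw [← tsum_mul_left]
    refine tsum_congr fun n => ?_
    rw [hpy' n, abs_mul, abs_of_nonneg hcnn]
    ring
  have hc1 : c = 1 := by
    rw [hry, hsy, hTy] at hy1
    rw [hrx] at hx1
    linear_combination hy1 - c * hx1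
  exact hne (funext fun k => by rw [hyc k, hc1, one_mul]).symm
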